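/- Let u: [t_ρ, T₊) → ℝⁿ be a C¹ solution of the energy identity ½|u̇(t)|² = U(u(t)) with u(t) ≠ p for all t, where U(x) ≤ c|x − p|² on the range of u. If lim_{t → T₊} u(t) = p, then T₊ = +∞. (Proof via the differential inequality d/dt |u − p| ≥ −|u̇| = −√(2U(u)) ≥ −√(2c)|u − p|, i.e. Gronwall: |u(t) − p| ≥ |u(t_ρ) − p| e^{−√(2c)(t − t_ρ)} > 0.) -/

import Mathlib

open Set Filter Topology

/-- Lemma 2.4: a zero-energy solution approaching a point `p` where
`U(x) ≤ c|x−p|²` cannot reach it in finite time.  Formulated in contrapositive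
form: if `T₊` is finite (a real number), the hypotheses are contradictory. -/
theorem infinite_time_to_reach_degenerate_zero (n : ℕ)
    (U : EuclideanSpace ℝ (Fin n) → ℝ) (hUc : Continuous U)
    (p : EuclideanSpace ℝ (Fin n)) (c : ℝ) (hc : 0 < c)
    (tρ Tp : ℝ) (htT : tρ < Tp)
    (u u' : ℝ → EuclideanSpace ℝ (Fin n))
    (hu : ∀ t ∈ Ico tρ Tp, HasDerivAt u (u' t) t)
    (hu'c : ContinuousOn u' (Ico tρ Tp))
    (hne : ∀ t ∈ Ico tρ Tp, u t ≠ p)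
    (hquad : ∀ t ∈ Ico tρ Tp, U (u t) ≤ c * ‖u t - p‖ ^ 2)
    (hen : ∀ t ∈ Ico tρ Tp, (1 : ℝ) / 2 * ‖u' t‖ ^ 2 = U (u t))
    (hlim : Tendsto u (𝓝[<] Tp) (𝓝 p)) :
    False := by
  set K : ℝ := Real.sqrt (2 * c) with hK
  have hKpos : 0 < K := Real.sqrt_pos.mpr (by linarith)
  -- pointwise bound ‖u' t‖ ≤ K * ‖u t - p‖
  have hbound : ∀ t ∈ Ico tρ Tp, ‖u' t‖ ≤ K * ‖u t - p‖ := by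
    intro t ht
    have h1 : ‖u' t‖ ^ 2 ≤ (K * ‖u t - p‖) ^ 2 := by
      have := hen t ht
      have h2 := hquad t ht
      have : ‖u' t‖ ^ 2 ≤ 2 * c * ‖u t - p‖ ^ 2 := by nlinarith
      have hsq : K ^ 2 = 2 * c := Real.sq_sqrt (by linarith)
      calc ‖u' t‖ ^ 2 ≤ 2 * c * ‖u t - p‖ ^ 2 := this
        _ = (K * ‖u t - p‖) ^ 2 := by rw [mul_pow, hsq]
    exact (abs_le_of_sq_le_sq' h1 (by positivity)).2
  have htρ : tρ ∈ Ico tρ Tp := ⟨le_refl _, htT⟩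
  set δ : ℝ := ‖u tρ - p‖ with hδ
  have hδpos : 0 < δ := by
    rw [hδ, norm_pos_iff, sub_ne_zero]
    exact hne tρ htρ
  set ε₀ : ℝ := δ * Real.exp (-(K * (Tp - tρ))) with hε₀
  have hε₀pos : 0 < ε₀ := by positivity
  -- find t₁ close to Tp with ‖u t₁ - p‖ < ε₀
  obtain ⟨t₁, ht₁d, ht₁⟩ : ∃ t₁, dist (u t₁) p < ε₀ ∧ t₁ ∈ Ioo tρ Tp := by
    have h1 : ∀ᶠ t in 𝓝[<] Tp, dist (u t) p < ε₀ :=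
      (Metric.tendsto_nhds.mp hlim) ε₀ hε₀pos
    have h2 : Ioo tρ Tp ∈ 𝓝[<] Tp := Ioo_mem_nhdsLT htT
    exact (h1.and (eventually_of_mem h2 fun x hx => hx)).exists
  -- time-reversed curve
  set g : ℝ → ℝ := fun τ => tρ + t₁ - τ with hg
  have hgmem : ∀ τ ∈ Icc tρ t₁, g τ ∈ Ico tρ Tp := by
    intro τ hτ
    constructor
    · simp only [hg]; linarith [hτ.2]
    · simp only [hg]; linarith [hτ.1, ht₁.2]
  have hgd : ∀ τ : ℝ, HasDerivAt g (-1) τ := by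
    intro τ
    have h := (hasDerivAt_const τ (tρ + t₁)).sub (hasDerivAt_id τ)
    rw [zero_sub] at h
    exact h
  have hfd : ∀ τ ∈ Ico tρ t₁,
      HasDerivAt (fun τ => u (g τ) - p) ((-1 : ℝ) • u' (g τ)) τ := by
    intro τ hτ
    have hgτ : g τ ∈ Ico tρ Tp := hgmem τ ⟨hτ.1, le_of_lt hτ.2⟩
    exact ((hu (g τ) hgτ).scomp τ (hgd τ)).sub_const p
  have hfc : ContinuousOn (fun τ => u (g τ) - p) (Icc tρ t₁) := by
    intro τ hτ
    rcases eq_or_lt_of_le hτ.2 with h | h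
    · -- τ = t₁, then g τ = tρ ∈ Ico, u differentiable there hence continuous at g τ
      have : ContinuousAt (fun τ => u (g τ) - p) τ := by
        have hgτ : g τ ∈ Ico tρ Tp := hgmem τ hτ
        have : ContinuousAt u (g τ) := (hu (g τ) hgτ).continuousAt
        exact (this.comp ((hgd τ).continuousAt)).sub continuousAt_const
      exact this.continuousWithinAt
    · have : ContinuousAt (fun τ => u (g τ) - p) τ := by
        have hgτ : g τ ∈ Ico tρ Tp := hgmem τ hτ
        have : ContinuousAt u (g τ) := (hu (g τ) hgτ).continuousAt
        exact (this.comp ((hgd τ).continuousAt)).sub continuousAt_const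
      exact this.continuousWithinAt
  have hinit : ‖u (g tρ) - p‖ ≤ ‖u t₁ - p‖ := by
    have : g tρ = t₁ := by simp [hg]
    rw [this]
  have hgron := norm_le_gronwallBound_of_norm_deriv_right_le (δ := ‖u t₁ - p‖)
    (K := K) (ε := 0) hfc
    (fun τ hτ => (hfd τ hτ).hasDerivWithinAt) hinit
    (fun τ hτ => by
      have hgτ : g τ ∈ Ico tρ Tp := hgmem τ ⟨hτ.1, le_of_lt hτ.2⟩
      have := hbound (g τ) hgτ
      rw [norm_smul]
      simpa using this)
  have hfin := hgron t₁ ⟨le_of_lt ht₁.1, le_refl _⟩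
  rw [gronwallBound_ε0] at hfin
  have hg1 : g t₁ = tρ := by simp [hg]
  rw [hg1] at hfin
  -- hfin : δ ≤ ‖u t₁ - p‖ * exp (K * (t₁ - tρ))
  have h5 : ‖u t₁ - p‖ < ε₀ := by rwa [← dist_eq_norm]
  have hexp : Real.exp (K * (t₁ - tρ)) ≤ Real.exp (K * (Tp - tρ)) := by
    apply Real.exp_le_exp.mpr
    have := ht₁.2
    nlinarith
  have : δ < ε₀ * Real.exp (K * (Tp - tρ)) := by
    calc δ ≤ ‖u t₁ - p‖ * Real.exp (K * (t₁ - tρ)) := hfin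
      _ < ε₀ * Real.exp (K * (t₁ - tρ)) := by
          exact mul_lt_mul_of_pos_right h5 (Real.exp_pos _)
      _ ≤ ε₀ * Real.exp (K * (Tp - tρ)) :=
          mul_le_mul_of_nonneg_left hexp (le_of_lt hε₀pos)
  rw [hε₀, mul_assoc, ← Real.exp_add, neg_add_cancel, Real.exp_zero, mul_one] at this
  exact lt_irrefl δ this
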